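/- For every ζ ∈ ℂ with |ζ| = 1, the sequence defined by θ_0 := 0 and θ_{k+1} := a_{−1}(ζ) + a_0(ζ)θ_k + a_1(ζ)θ_k² converges to a limit θ which is a solution of minimum modulus of the quadratic equation: θ satisfies a_1(ζ)θ² + (a_0(ζ)−1)θ + a_{−1}(ζ) = 0, and every μ ∈ ℂ with a_1(ζ)μ² + (a_0(ζ)−1)μ + a_{−1}(ζ) = 0 satisfies |θ| ≤ |μ|. -/

import Mathlib

open Filter Topology

/- Convention: the transition probabilities a_{i,j} (i,j ∈ {−1,0,1}) are encoded
as `v : Fin 3 → Fin 3 → ℝ`, where the index `0, 1, 2` corresponds to `−1, 0, 1`. -/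

/-- `symb v i z = a_i(z) = a_{i,−1} z⁻¹ + a_{i,0} + a_{i,1} z`. -/
noncomputable def symb (v : Fin 3 → Fin 3 → ℝ) (i : Fin 3) (z : ℂ) : ℂ :=
  (v i 0 : ℂ) * z⁻¹ + (v i 1 : ℂ) + (v i 2 : ℂ) * z

/-- `symbOne v i = a_i(1) = a_{i,−1} + a_{i,0} + a_{i,1}` (as a real number). -/
def symbOne (v : Fin 3 → Fin 3 → ℝ) (i : Fin 3) : ℝ := v i 0 + v i 1 + v i 2

/-- The fixed-point iteration θ_0 = 0, θ_{k+1} = a_{−1}(ζ) + a_0(ζ) θ_k + a_1(ζ) θ_k². -/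
noncomputable def quadIter (am1 a0 a1 : ℂ) : ℕ → ℂ
  | 0 => 0
  | k + 1 => am1 + a0 * quadIter am1 a0 a1 k + a1 * (quadIter am1 a0 a1 k) ^ 2

/-- The real comparison iteration s_0 = 0, s_{k+1} = bA + bB s_k + bC s_k². -/
noncomputable def sIter (bA bB bC : ℝ) : ℕ → ℝ
  | 0 => 0
  | k + 1 => bA + bB * sIter bA bB bC k + bC * (sIter bA bB bC k) ^ 2

set_option maxHeartbeats 1000000 in
theorem quadIter_key (A B C : ℂ)
    (hb : ‖A‖ + ‖B‖ + ‖C‖ ≤ 1) :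
    ∃ θ : ℂ, Tendsto (quadIter A B C) atTop (𝓝 θ) ∧
      C * θ ^ 2 + (B - 1) * θ + A = 0 ∧
      ∀ μ : ℂ, C * μ ^ 2 + (B - 1) * μ + A = 0 → ‖θ‖ ≤ ‖μ‖ := by
  set bA := ‖A‖ with hbA
  set bB := ‖B‖ with hbB
  set bC := ‖C‖ with hbC
  have hA0 : 0 ≤ bA := norm_nonneg A
  have hB0 : 0 ≤ bB := norm_nonneg B
  have hC0 : 0 ≤ bC := norm_nonneg C
  set f := quadIter A B C with hf
  set g := sIter bA bB bC with hg
  have hf0 : f 0 = 0 := rfl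
  have hfs : ∀ k, f (k + 1) = A + B * f k + C * (f k) ^ 2 := fun _ => rfl
  have hg0' : g 0 = 0 := rfl
  have hgs : ∀ k, g (k + 1) = bA + bB * g k + bC * (g k) ^ 2 := fun _ => rfl
  have hg0 : ∀ k, 0 ≤ g k := by
    intro k
    induction k with
    | zero => simp [hg0']
    | succ k ih => rw [hgs]; positivity
  have hg1 : ∀ k, g k ≤ 1 := by
    intro k
    induction k with
    | zero => simp [hg0']
    | succ k ih =>
      rw [hgs]
      nlinarith [mul_nonneg hB0 (sub_nonneg.2 ih),
        mul_nonneg hC0 (mul_nonneg (sub_nonneg.2 ih)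
          (by linarith [hg0 k] : (0:ℝ) ≤ 1 + g k))]
  have hgmono : Monotone g := by
    apply monotone_nat_of_le_succ
    intro k
    induction k with
    | zero => rw [hg0', hgs, hg0']; nlinarith
    | succ k ih =>
      calc g (k + 1) = bA + bB * g k + bC * (g k) ^ 2 := hgs k
        _ ≤ bA + bB * g (k + 1) + bC * (g (k + 1)) ^ 2 := by
            nlinarith [hg0 k, hg0 (k + 1), mul_nonneg hB0 (sub_nonneg.2 ih),
              mul_nonneg hC0 (mul_nonneg (add_nonneg (hg0 (k + 1)) (hg0 k))
                (sub_nonneg.2 ih))]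
        _ = g (k + 2) := (hgs (k + 1)).symm
  have hbdd : BddAbove (Set.range g) := ⟨1, by rintro x ⟨k, rfl⟩; exact hg1 k⟩
  set s := ⨆ k, g k with hs
  have hgs_tend : Tendsto g atTop (𝓝 s) := tendsto_atTop_ciSup hgmono hbdd
  have hsle : ∀ k, g k ≤ s := fun k => le_ciSup hbdd k
  have hs0 : 0 ≤ s := le_trans (hg0 0) (hsle 0)
  have hfix : bA + bB * s + bC * s ^ 2 = s := by
    have h1 : Tendsto (fun k => g (k + 1)) atTop (𝓝 s) :=
      hgs_tend.comp (tendsto_add_atTop_nat 1)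
    have h2 : Tendsto (fun k => bA + bB * g k + bC * (g k) ^ 2) atTop
        (𝓝 (bA + bB * s + bC * s ^ 2)) :=
      (tendsto_const_nhds.add (tendsto_const_nhds.mul hgs_tend)).add
        (tendsto_const_nhds.mul (hgs_tend.pow 2))
    have h1' : Tendsto (fun k => bA + bB * g k + bC * (g k) ^ 2) atTop (𝓝 s) := by
      simpa only [hgs] using h1
    exact tendsto_nhds_unique h2 h1'
  have hmin : ∀ r, 0 ≤ r → bA + bB * r + bC * r ^ 2 = r → s ≤ r := by
    intro r hr hfr
    have hk : ∀ k, g k ≤ r := by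
      intro k
      induction k with
      | zero => simpa [hg0'] using hr
      | succ k ih =>
        rw [hgs]
        nlinarith [mul_nonneg hB0 (sub_nonneg.2 ih),
          mul_nonneg hC0 (mul_nonneg (add_nonneg hr (hg0 k)) (sub_nonneg.2 ih))]
    exact ciSup_le hk
  have habsf : ∀ k, ‖f k‖ ≤ g k := by
    intro k
    induction k with
    | zero => simp [hf0, hg0']
    | succ k ih =>
      rw [hfs, hgs]
      have h1 : ‖A + B * f k + C * (f k) ^ 2‖ ≤
          bA + bB * ‖f k‖ + bC * (‖f k‖) ^ 2 := by
        refine le_trans ((norm_add_le _ _).trans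
          (add_le_add_left (norm_add_le _ _) _)) ?_
        simp [norm_mul, norm_pow, hbA, hbB, hbC]
      refine le_trans h1 ?_
      nlinarith [norm_nonneg (f k),
        mul_nonneg hB0 (sub_nonneg.2 ih),
        mul_nonneg hC0 (mul_nonneg (add_nonneg (hg0 k) (norm_nonneg (f k)))
          (sub_nonneg.2 ih))]
  have hdiff : ∀ k, ‖f (k + 1) - f k‖ ≤ g (k + 1) - g k := by
    intro k
    induction k with
    | zero =>
      rw [hf0, hg0']
      simp only [sub_zero]
      rw [hfs, hgs, hf0, hg0']
      simp [hbA]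
    | succ k ih =>
      have e : f (k + 2) - f (k + 1) =
          B * (f (k + 1) - f k) + C * ((f (k + 1) + f k) * (f (k + 1) - f k)) := by
        rw [hfs (k + 1), hfs k]; ring
      rw [e]
      have h1 : ‖B * (f (k + 1) - f k) +
            C * ((f (k + 1) + f k) * (f (k + 1) - f k))‖ ≤
          bB * ‖f (k + 1) - f k‖ +
            bC * ((‖f (k + 1)‖ + ‖f k‖) *
              ‖f (k + 1) - f k‖) := by
        refine le_trans (norm_add_le _ _) ?_
        simp only [norm_mul, hbB, hbC]
        gcongr
        exact norm_add_le _ _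
      refine le_trans h1 ?_
      have hgd : g (k + 2) - g (k + 1) =
          bB * (g (k + 1) - g k) + bC * ((g (k + 1) + g k) * (g (k + 1) - g k)) := by
        rw [hgs (k + 1), hgs k]; ring
      rw [hgd]
      have d0 : 0 ≤ ‖f (k + 1) - f k‖ := norm_nonneg _
      nlinarith [habsf k, habsf (k + 1), ih, hg0 k, hg0 (k + 1), hB0, hC0, d0,
        mul_nonneg hB0 (sub_nonneg.2 ih),
        mul_nonneg hC0 (mul_nonneg (add_nonneg (hg0 (k + 1)) (hg0 k)) (sub_nonneg.2 ih)),
        mul_nonneg hC0 (mul_nonneg (add_nonneg (sub_nonneg.2 (habsf (k + 1)))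
          (sub_nonneg.2 (habsf k))) d0)]
  have hCdiff : ∀ n m, n ≤ m → ‖f m - f n‖ ≤ g m - g n := by
    intro n m hnm
    induction m, hnm using Nat.le_induction with
    | base => simp
    | succ m hm ih =>
      calc ‖f (m + 1) - f n‖
          ≤ ‖f (m + 1) - f m‖ + ‖f m - f n‖ :=
            norm_sub_le_norm_sub_add_norm_sub _ _ _
        _ ≤ (g (m + 1) - g m) + (g m - g n) := add_le_add (hdiff m) ih
        _ = g (m + 1) - g n := by ring
  have hcauchy : CauchySeq f := by
    apply cauchySeq_of_le_tendsto_0 (fun N => s - g N)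
    · intro n m N hn hm
      rcases le_total n m with h | h
      · calc dist (f n) (f m) = ‖f m - f n‖ := by
              rw [dist_comm, Complex.dist_eq]
          _ ≤ g m - g n := hCdiff n m h
          _ ≤ s - g N := by
              have := hsle m; have := hgmono hn; linarith
      · calc dist (f n) (f m) = ‖f n - f m‖ := Complex.dist_eq _ _
          _ ≤ g n - g m := hCdiff m n h
          _ ≤ s - g N := by
              have := hsle n; have := hgmono hm; linarith
    · have : Tendsto (fun N => s - g N) atTop (𝓝 (s - s)) :=
        tendsto_const_nhds.sub hgs_tend
      simpa using this
  obtain ⟨θ, hθ⟩ := cauchySeq_tendsto_of_complete hcauchy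
  have hshift : Tendsto (fun k => f (k + 1)) atTop (𝓝 θ) :=
    hθ.comp (tendsto_add_atTop_nat 1)
  have h2 : Tendsto (fun k => A + B * f k + C * (f k) ^ 2) atTop
      (𝓝 (A + B * θ + C * θ ^ 2)) :=
    (tendsto_const_nhds.add (tendsto_const_nhds.mul hθ)).add
      (tendsto_const_nhds.mul (hθ.pow 2))
  have hshift' : Tendsto (fun k => A + B * f k + C * (f k) ^ 2) atTop (𝓝 θ) := by
    simpa only [hfs] using hshift
  have hfixθ : A + B * θ + C * θ ^ 2 = θ := tendsto_nhds_unique h2 hshift'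
  have heq : C * θ ^ 2 + (B - 1) * θ + A = 0 := by linear_combination hfixθ
  have hθs : ‖θ‖ ≤ s := by
    have h1 : Tendsto (fun k => ‖f k‖) atTop (𝓝 (‖θ‖)) :=
      (continuous_norm.tendsto θ).comp hθ
    exact le_of_tendsto_of_tendsto' h1 hgs_tend habsf
  refine ⟨θ, hθ, heq, ?_⟩
  intro μ hμ
  by_cases hμθ : μ = θ
  · rw [hμθ]
  by_cases hAz : A = 0
  · have hfz : ∀ k, f k = 0 := by
      intro k
      induction k with
      | zero => exact hf0
      | succ k ih => rw [hfs, ih, hAz]; ring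
    have hθ0 : θ = 0 := by
      have hfe : f = fun _ => (0 : ℂ) := funext hfz
      rw [hfe] at hθ
      exact tendsto_nhds_unique hθ tendsto_const_nhds
    rw [hθ0]
    simp
  · by_cases hCz : C = 0
    · exfalso
      apply hμθ
      have hB1 : B - 1 ≠ 0 := by
        intro h
        apply hAz
        rw [hCz, h] at heq
        simpa using heq
      have h3 : (B - 1) * μ = (B - 1) * θ := by
        rw [hCz] at hμ heq
        linear_combination hμ - heq
      exact mul_left_cancel₀ hB1 h3
    · have hsumr : C * (μ + θ) + (B - 1) = 0 := by
        have h3 : (μ - θ) * (C * (μ + θ) + (B - 1)) = 0 := by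
          linear_combination hμ - heq
        rcases mul_eq_zero.1 h3 with h | h
        · exact absurd (sub_eq_zero.1 h) hμθ
        · exact h
      have hprod : C * (μ * θ) = A := by
        linear_combination (-1 : ℂ) * heq + θ * hsumr
      have habsprod : bC * (‖μ‖ * ‖θ‖) = bA := by
        rw [hbC, hbA, ← norm_mul, ← norm_mul]
        exact congrArg (fun z : ℂ => ‖z‖) hprod
      have hbCpos : 0 < bC := norm_pos_iff.2 hCz
      have hkey : bC * s ^ 2 ≤ bA := by
        by_contra hlt
        push_neg at hlt
        have hspos : 0 < s := by nlinarith
        set r := bA / (bC * s) with hr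
        have hpos : 0 < bC * s := mul_pos hbCpos hspos
        have hr0 : 0 ≤ r := div_nonneg hA0 hpos.le
        have hrfix : bA + bB * r + bC * r ^ 2 = r := by
          rw [hr]
          have hne : bC * s ≠ 0 := hpos.ne'
          field_simp
          linear_combination bA * hfix
        have h5 : s ≤ r := hmin r hr0 hrfix
        have h6 : r < s := by
          rw [hr, div_lt_iff₀ hpos]
          nlinarith
        linarith
      by_cases hθ0 : ‖θ‖ = 0
      · rw [hθ0]; exact norm_nonneg μ
      · have hθpos : 0 < ‖θ‖ :=
          lt_of_le_of_ne (norm_nonneg θ) (Ne.symm hθ0)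
        have h7 : bC * (‖θ‖) ^ 2 ≤ bC * (‖μ‖ * ‖θ‖) := by
          rw [habsprod]
          calc bC * (‖θ‖) ^ 2 ≤ bC * s ^ 2 :=
                mul_le_mul_of_nonneg_left
                  (pow_le_pow_left₀ (norm_nonneg θ) hθs 2) hC0
            _ ≤ bA := hkey
        have h8 : (‖θ‖) ^ 2 ≤ ‖μ‖ * ‖θ‖ :=
          le_of_mul_le_mul_left h7 hbCpos
        rw [pow_two] at h8
        exact le_of_mul_le_mul_right h8 hθpos

/- STATEMENT 17: for every ζ on the unit circle the iteration converges to a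
solution of minimum modulus of a_1(ζ)θ² + (a_0(ζ)−1)θ + a_{−1}(ζ) = 0. -/

theorem stmt17 (v : Fin 3 → Fin 3 → ℝ) (hnn : ∀ i j, 0 ≤ v i j)
    (hsum : ∑ i, ∑ j, v i j = 1)
    (ζ : ℂ) (hζ : ‖ζ‖ = 1) :
    ∃ θ : ℂ,
      Tendsto (quadIter (symb v 0 ζ) (symb v 1 ζ) (symb v 2 ζ)) atTop (𝓝 θ) ∧
      symb v 2 ζ * θ ^ 2 + (symb v 1 ζ - 1) * θ + symb v 0 ζ = 0 ∧
      ∀ μ : ℂ, symb v 2 ζ * μ ^ 2 + (symb v 1 ζ - 1) * μ + symb v 0 ζ = 0 →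
        ‖θ‖ ≤ ‖μ‖ := by
  have habs : ∀ i : Fin 3, ‖symb v i ζ‖ ≤ v i 0 + v i 1 + v i 2 := by
    intro i
    have h1 : ‖(v i 0 : ℂ) * ζ⁻¹‖ = v i 0 := by
      rw [norm_mul, norm_inv, hζ]
      simp [Complex.norm_real, abs_of_nonneg (hnn i 0)]
    have h2 : ‖(v i 1 : ℂ)‖ = v i 1 := by
      simp [Complex.norm_real, abs_of_nonneg (hnn i 1)]
    have h3 : ‖(v i 2 : ℂ) * ζ‖ = v i 2 := by
      rw [norm_mul, hζ]
      simp [Complex.norm_real, abs_of_nonneg (hnn i 2)]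
    calc ‖symb v i ζ‖
        ≤ ‖(v i 0 : ℂ) * ζ⁻¹‖ + ‖(v i 1 : ℂ)‖ +
            ‖(v i 2 : ℂ) * ζ‖ :=
          (norm_add_le _ _).trans (add_le_add_left (norm_add_le _ _) _)
      _ = v i 0 + v i 1 + v i 2 := by rw [h1, h2, h3]
  have hsum' : ‖symb v 0 ζ‖ + ‖symb v 1 ζ‖ +
      ‖symb v 2 ζ‖ ≤ 1 := by
    simp only [Fin.sum_univ_three] at hsum
    linarith [habs 0, habs 1, habs 2]
  exact quadIter_key _ _ _ hsum'
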